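/- The function f_{T,ℓ} defined by f_{T,ℓ}(t) = (4t/ℓ⁴)(πℓ²/2 - 2ℓt + t²/2) on [0, ℓ], (4t/ℓ⁴)(ℓ²·arcsin((2ℓ² - t²)/t²) + 2ℓ√(t² - ℓ²) - ℓ² - t²/2) on [ℓ, √2·ℓ], and 0 elsewhere, is nonnegative and integrates to 1 over ℝ. -/

import Mathlib

open MeasureTheory Real

/-- The density `f_{T,ℓ}` of the distance between two independent uniform points in a
square of side `ℓ`. -/
noncomputable def fTL (ℓ t : ℝ) : ℝ :=
  if t ∈ Set.Icc 0 ℓ then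
    4 * t / ℓ ^ 4 * (Real.pi * ℓ ^ 2 / 2 - 2 * ℓ * t + t ^ 2 / 2)
  else if t ∈ Set.Icc ℓ (Real.sqrt 2 * ℓ) then
    4 * t / ℓ ^ 4 *
      (ℓ ^ 2 * Real.arcsin ((2 * ℓ ^ 2 - t ^ 2) / t ^ 2) +
        2 * ℓ * Real.sqrt (t ^ 2 - ℓ ^ 2) - ℓ ^ 2 - t ^ 2 / 2)
  else 0

open Set

/-! ### Auxiliary definitions -/

/-- The bracketed factor of the density on `[ℓ, √2 ℓ]`, rewritten via
`arcsin ((2ℓ² - t²)/t²) = 2 arcsin (ℓ/t) - π/2`. -/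
noncomputable def HH (ℓ t : ℝ) : ℝ :=
  2*ℓ^2 * Real.arcsin (ℓ/t) - Real.pi*ℓ^2/2 + 2*ℓ*Real.sqrt (t^2-ℓ^2) - ℓ^2 - t^2/2

/-- An antiderivative of `t ↦ 4t/ℓ⁴ * HH ℓ t`. -/
noncomputable def FF (ℓ t : ℝ) : ℝ :=
  4/ℓ^2*(t^2*Real.arcsin (ℓ/t)) + 4/ℓ*Real.sqrt (t^2-ℓ^2) - Real.pi/ℓ^2*t^2
    + 8/(3*ℓ^3)*Real.sqrt (t^2-ℓ^2)^3 - 2/ℓ^2*t^2 - 1/(2*ℓ^4)*t^4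

/-! ### Elementary lemmas -/

lemma arcsin_double {u : ℝ} (h0 : 0 ≤ u) (h1 : u ≤ 1) :
    Real.arcsin (2*u^2 - 1) = 2 * Real.arcsin u - Real.pi/2 := by
  have hsin : Real.sin (Real.arcsin u) = u := Real.sin_arcsin (by linarith) h1
  have hs : Real.sin (2 * Real.arcsin u - Real.pi/2) = 2*u^2 - 1 := by
    rw [Real.sin_sub_pi_div_two, Real.cos_two_mul]
    have hc : Real.cos (Real.arcsin u)^2 = 1 - u^2 := by
      nlinarith [Real.sin_sq_add_cos_sq (Real.arcsin u)]
    nlinarith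
  rw [← hs, Real.arcsin_sin]
  · linarith [Real.arcsin_nonneg.2 h0]
  · linarith [Real.arcsin_le_pi_div_two u]

lemma one_le_sqrt_two : (1:ℝ) ≤ Real.sqrt 2 := by
  nlinarith [Real.sq_sqrt (by norm_num : (0:ℝ) ≤ 2), Real.sqrt_nonneg 2]

/-! ### Derivatives -/

lemma sqrt_aux {ℓ t : ℝ} (hℓ : 0 < ℓ) (ht : ℓ < t) :
    HasDerivAt (fun t : ℝ => Real.sqrt (t^2-ℓ^2)) (t / Real.sqrt (t^2-ℓ^2)) t := by
  have ht0 : 0 < t := hℓ.trans ht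
  have hpos : 0 < t^2 - ℓ^2 := by nlinarith
  have hs : (0:ℝ) < Real.sqrt (t^2-ℓ^2) := Real.sqrt_pos.2 hpos
  have h1 : HasDerivAt (fun t : ℝ => t^2 - ℓ^2) (2*t) t := by
    simpa using (hasDerivAt_pow 2 t).sub_const (ℓ^2)
  have := h1.sqrt hpos.ne'
  convert this using 1
  rw [div_eq_div_iff hs.ne' (by positivity)]
  ring

lemma arcsin_aux {ℓ t : ℝ} (hℓ : 0 < ℓ) (ht : ℓ < t) :
    HasDerivAt (fun t : ℝ => Real.arcsin (ℓ/t)) (-(ℓ/(t*Real.sqrt (t^2-ℓ^2)))) t := by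
  have ht0 : 0 < t := hℓ.trans ht
  have hpos : 0 < t^2 - ℓ^2 := by nlinarith
  have hs : (0:ℝ) < Real.sqrt (t^2-ℓ^2) := Real.sqrt_pos.2 hpos
  have hin : HasDerivAt (fun t : ℝ => ℓ/t) (-(ℓ/t^2)) t := by
    simpa [div_eq_mul_inv, mul_comm] using (hasDerivAt_inv ht0.ne').const_mul ℓ
  have h1 : ℓ/t ≠ -1 := by
    have : (0:ℝ) < ℓ/t := by positivity
    linarith
  have h2 : ℓ/t ≠ 1 := ne_of_lt (by rw [div_lt_one ht0]; exact ht)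
  have key : Real.sqrt (1 - (ℓ/t)^2) = Real.sqrt (t^2-ℓ^2) / t := by
    rw [show 1 - (ℓ/t)^2 = (t^2-ℓ^2)/t^2 by field_simp, Real.sqrt_div hpos.le,
      Real.sqrt_sq ht0.le]
  have := (Real.hasDerivAt_arcsin h1 h2).comp t hin
  refine this.congr_deriv ?_
  rw [key]
  field_simp

lemma HH_hasDeriv {ℓ t : ℝ} (hℓ : 0 < ℓ) (ht : ℓ < t) :
    HasDerivAt (HH ℓ) (2*ℓ*Real.sqrt (t^2-ℓ^2)/t - t) t := by
  have ht0 : 0 < t := hℓ.trans ht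
  have hpos : 0 < t^2 - ℓ^2 := by nlinarith
  have hs : (0:ℝ) < Real.sqrt (t^2-ℓ^2) := Real.sqrt_pos.2 hpos
  have hs2 : Real.sqrt (t^2-ℓ^2)^2 = t^2-ℓ^2 := Real.sq_sqrt hpos.le
  have hid : HasDerivAt (fun t : ℝ => t^2/2) (t) t := by
    simpa using ((hasDerivAt_pow 2 t).div_const 2)
  have h2 := (((((arcsin_aux hℓ ht).const_mul (2*ℓ^2)).sub_const (Real.pi*ℓ^2/2)).add
    ((sqrt_aux hℓ ht).const_mul (2*ℓ))).sub_const (ℓ^2)).sub hid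
  refine h2.congr_deriv ?_
  field_simp
  linear_combination (-2*ℓ) * hs2

lemma FF_hasDeriv {ℓ t : ℝ} (hℓ : 0 < ℓ) (ht : ℓ < t) :
    HasDerivAt (FF ℓ) (4*t/ℓ^4 * HH ℓ t) t := by
  have ht0 : 0 < t := hℓ.trans ht
  have hpos : 0 < t^2 - ℓ^2 := by nlinarith
  have hs : (0:ℝ) < Real.sqrt (t^2-ℓ^2) := Real.sqrt_pos.2 hpos
  have hs2 : Real.sqrt (t^2-ℓ^2)^2 = t^2-ℓ^2 := Real.sq_sqrt hpos.le
  have harc := arcsin_aux hℓ ht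
  have hsq := sqrt_aux hℓ ht
  have hta : HasDerivAt (fun t : ℝ => t^2*Real.arcsin (ℓ/t))
      (2*t*Real.arcsin (ℓ/t) - ℓ*t/Real.sqrt (t^2-ℓ^2)) t := by
    refine ((hasDerivAt_pow 2 t).mul harc).congr_deriv ?_
    field_simp
    ring
  have hcb : HasDerivAt (fun t : ℝ => Real.sqrt (t^2-ℓ^2)^3)
      (3*t*Real.sqrt (t^2-ℓ^2)) t := by
    refine (hsq.pow 3).congr_deriv ?_
    field_simp
    ring
  have h3 := (((((hta.const_mul (4/ℓ^2)).add (hsq.const_mul (4/ℓ))).sub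
      ((hasDerivAt_pow 2 t).const_mul (Real.pi/ℓ^2))).add
      (hcb.const_mul (8/(3*ℓ^3)))).sub ((hasDerivAt_pow 2 t).const_mul (2/ℓ^2))).sub
      ((hasDerivAt_pow 4 t).const_mul (1/(2*ℓ^4)))
  refine h3.congr_deriv ?_
  unfold HH
  field_simp
  ring

/-! ### Continuity -/

lemma contOn_arc {ℓ : ℝ} (hℓ : 0 < ℓ) : ContinuousOn (fun t : ℝ => Real.arcsin (ℓ/t)) (Ici ℓ) :=
  Real.continuous_arcsin.comp_continuousOn
    (continuousOn_const.div continuousOn_id (fun _ hx => (hℓ.trans_le hx).ne'))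

lemma cont_sqrtp (ℓ : ℝ) : Continuous (fun t : ℝ => Real.sqrt (t^2-ℓ^2)) :=
  Real.continuous_sqrt.comp (by continuity)

lemma contOn_HH {ℓ : ℝ} (hℓ : 0 < ℓ) : ContinuousOn (HH ℓ) (Ici ℓ) := by
  unfold HH
  exact ((((continuousOn_const.mul (contOn_arc hℓ)).sub continuousOn_const).add
    (continuousOn_const.mul (cont_sqrtp ℓ).continuousOn)).sub continuousOn_const).sub
    ((continuous_pow 2).continuousOn.div_const 2)

lemma contOn_FF {ℓ : ℝ} (hℓ : 0 < ℓ) : ContinuousOn (FF ℓ) (Ici ℓ) := by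
  unfold FF
  exact (((((continuousOn_const.mul ((continuous_pow 2).continuousOn.mul (contOn_arc hℓ))).add
    (continuousOn_const.mul (cont_sqrtp ℓ).continuousOn)).sub
    (continuousOn_const.mul (continuous_pow 2).continuousOn)).add
    (continuousOn_const.mul ((cont_sqrtp ℓ).pow 3).continuousOn)).sub
    (continuousOn_const.mul (continuous_pow 2).continuousOn)).sub
    (continuousOn_const.mul (continuous_pow 4).continuousOn)

/-! ### Endpoint value and nonnegativity of `HH` -/

lemma HH_end {ℓ : ℝ} (hℓ : 0 < ℓ) : HH ℓ (Real.sqrt 2 * ℓ) = 0 := by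
  have h2 : (0:ℝ) ≤ 2 := by norm_num
  have h1 : (Real.sqrt 2 * ℓ)^2 - ℓ^2 = ℓ^2 := by
    rw [mul_pow, Real.sq_sqrt h2]; ring
  have hsq : Real.sqrt ((Real.sqrt 2*ℓ)^2 - ℓ^2) = ℓ := by rw [h1, Real.sqrt_sq hℓ.le]
  have h3 : ℓ/(Real.sqrt 2*ℓ) = Real.sqrt 2/2 := by
    rw [div_eq_div_iff (by positivity) (by norm_num)]
    nlinarith [Real.sq_sqrt h2]
  have h4 : Real.arcsin (Real.sqrt 2/2) = Real.pi/4 := by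
    rw [← Real.sin_pi_div_four]
    exact Real.arcsin_sin (by linarith [Real.pi_pos]) (by linarith [Real.pi_pos])
  unfold HH
  rw [h3, h4, hsq, mul_pow, Real.sq_sqrt h2]
  ring

lemma HH_nonneg {ℓ : ℝ} (hℓ : 0 < ℓ) :
    ∀ t ∈ Icc ℓ (Real.sqrt 2 * ℓ), 0 ≤ HH ℓ t := by
  have hsl : ℓ ≤ Real.sqrt 2 * ℓ := by nlinarith [one_le_sqrt_two]
  have hanti : AntitoneOn (HH ℓ) (Icc ℓ (Real.sqrt 2 * ℓ)) := by
    apply antitoneOn_of_deriv_nonpos (convex_Icc _ _)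
      ((contOn_HH hℓ).mono Icc_subset_Ici_self)
    · rw [interior_Icc]
      intro x hx
      exact ((HH_hasDeriv hℓ hx.1).differentiableAt).differentiableWithinAt
    · rw [interior_Icc]
      intro x hx
      rw [(HH_hasDeriv hℓ hx.1).deriv]
      have hx0 : 0 < x := hℓ.trans hx.1
      have hpos : 0 < x^2 - ℓ^2 := by nlinarith [hx.1]
      have hs2 : Real.sqrt (x^2-ℓ^2)^2 = x^2-ℓ^2 := Real.sq_sqrt hpos.le
      have hkey : 2*ℓ*Real.sqrt (x^2-ℓ^2) ≤ x^2 := by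
        nlinarith [Real.sqrt_nonneg (x^2-ℓ^2), sq_nonneg (x^2 - 2*ℓ^2),
          sq_nonneg (2*ℓ*Real.sqrt (x^2-ℓ^2) - x^2)]
      rw [sub_nonpos, div_le_iff₀ hx0]
      nlinarith
  intro t htm
  have := hanti htm (right_mem_Icc.2 hsl) htm.2
  rw [HH_end hℓ] at this
  exact this

/-! ### `fTL` coincides with `4t/ℓ⁴ ⬝ HH` on `[ℓ, √2 ℓ]` -/

lemma fTL_eq {ℓ : ℝ} (hℓ : 0 < ℓ) :
    ∀ t ∈ Icc ℓ (Real.sqrt 2 * ℓ), fTL ℓ t = 4*t/ℓ^4 * HH ℓ t := by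
  rintro t ⟨ht1, ht2⟩
  rcases eq_or_lt_of_le ht1 with h | h
  · -- t = ℓ
    subst h
    have hmem : ℓ ∈ Icc (0:ℝ) ℓ := ⟨hℓ.le, le_refl ℓ⟩
    rw [fTL, if_pos hmem]
    unfold HH
    rw [div_self (hℓ.ne'), Real.arcsin_one, sub_self, Real.sqrt_zero]
    ring
  · -- ℓ < t
    have ht0 : 0 < t := hℓ.trans h
    have hne : t ∉ Icc (0:ℝ) ℓ := by
      intro hc
      exact absurd hc.2 (not_le.2 h)
    rw [fTL, if_neg hne, if_pos ⟨ht1, ht2⟩]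
    have hu0 : (0:ℝ) ≤ ℓ/t := by positivity
    have hu1 : ℓ/t ≤ 1 := by rw [div_le_one ht0]; exact h.le
    have harg : (2*ℓ^2 - t^2)/t^2 = 2*(ℓ/t)^2 - 1 := by field_simp
    rw [harg, arcsin_double hu0 hu1]
    unfold HH
    ring

/-! ### Main theorem -/

/-- `f_{T,ℓ}` is nonnegative and integrates to `1` over `ℝ`. -/
theorem stmt_5 (ℓ : ℝ) (hℓ : 0 < ℓ) :
    (∀ t, 0 ≤ fTL ℓ t) ∧ ∫ t, fTL ℓ t = 1 := by
  have hsl : ℓ ≤ Real.sqrt 2 * ℓ := by nlinarith [one_le_sqrt_two]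
  constructor
  · -- nonnegativity
    intro t
    by_cases hmem : t ∈ Icc ℓ (Real.sqrt 2 * ℓ)
    · rw [fTL_eq hℓ t hmem]
      have ht0 : 0 < t := hℓ.trans_le hmem.1
      have := HH_nonneg hℓ t hmem
      positivity
    · rw [fTL]
      by_cases h1 : t ∈ Icc (0:ℝ) ℓ
      · rw [if_pos h1]
        obtain ⟨h0, hl⟩ := h1
        apply mul_nonneg (div_nonneg (by linarith) (by positivity))
        nlinarith [Real.pi_gt_three]
      · rw [if_neg h1, if_neg hmem]
  · -- integral
    have h0l : (0:ℝ) ≤ ℓ := hℓ.le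
    -- the polynomial branch and its antiderivative
    set g1 : ℝ → ℝ := fun t => 4 * t / ℓ ^ 4 * (Real.pi * ℓ ^ 2 / 2 - 2 * ℓ * t + t ^ 2 / 2)
      with hg1
    set Q : ℝ → ℝ := fun t => Real.pi/ℓ^2*t^2 + (-8/(3*ℓ^3))*t^3 + 1/(2*ℓ^4)*t^4 with hQ
    have hg1cont : Continuous g1 := by fun_prop
    have hEq1 : EqOn (fTL ℓ) g1 (Icc 0 ℓ) := by
      intro x hx
      rw [fTL, if_pos hx]
    set g2 : ℝ → ℝ := fun t => 4*t/ℓ^4 * HH ℓ t with hg2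
    have hg2cont : ContinuousOn g2 (Icc ℓ (Real.sqrt 2 * ℓ)) :=
      ((continuous_const.mul continuous_id).div_const _).continuousOn.mul
        ((contOn_HH hℓ).mono Icc_subset_Ici_self)
    have hEq2 : EqOn (fTL ℓ) g2 (Icc ℓ (Real.sqrt 2 * ℓ)) := fTL_eq hℓ
    -- interval integrability of fTL on the two pieces
    have int1 : IntervalIntegrable (fTL ℓ) volume 0 ℓ := by
      rw [intervalIntegrable_iff_integrableOn_Ioc_of_le h0l]
      exact (hg1cont.integrableOn_Ioc).congr_fun
        (fun x hx => (hEq1 (Ioc_subset_Icc_self hx)).symm) measurableSet_Ioc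
    have int2 : IntervalIntegrable (fTL ℓ) volume ℓ (Real.sqrt 2 * ℓ) := by
      rw [intervalIntegrable_iff_integrableOn_Ioc_of_le hsl]
      exact ((hg2cont.integrableOn_Icc).mono_set Ioc_subset_Icc_self).congr_fun
        (fun x hx => (hEq2 (Ioc_subset_Icc_self hx)).symm) measurableSet_Ioc
    -- the support of fTL is inside (0, √2 ℓ]
    have hsupp : ∀ x ∉ Ioc (0:ℝ) (Real.sqrt 2 * ℓ), fTL ℓ x = 0 := by
      intro x hx
      rw [mem_Ioc, not_and_or] at hx
      rw [fTL]
      split_ifs with h1 h2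
      · have hx0 : x = 0 := by
          rcases hx with h | h
          · exact le_antisymm (not_lt.1 h) h1.1
          · exfalso; push_neg at h; linarith [h1.2]
        rw [hx0]; ring
      · exfalso
        rcases hx with h | h
        · exact h (hℓ.trans_le h2.1)
        · push_neg at h; linarith [h2.2]
      · rfl
    calc ∫ t, fTL ℓ t = ∫ t in Ioc (0:ℝ) (Real.sqrt 2 * ℓ), fTL ℓ t :=
          (setIntegral_eq_integral_of_forall_compl_eq_zero hsupp).symm
      _ = ∫ t in (0:ℝ)..(Real.sqrt 2 * ℓ), fTL ℓ t :=
          (intervalIntegral.integral_of_le (by linarith)).symm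
      _ = (∫ t in (0:ℝ)..ℓ, fTL ℓ t) + ∫ t in ℓ..(Real.sqrt 2 * ℓ), fTL ℓ t :=
          (intervalIntegral.integral_add_adjacent_intervals int1 int2).symm
      _ = 1 := by
          have v1 : ∫ t in (0:ℝ)..ℓ, fTL ℓ t = Real.pi - 13/6 := by
            rw [intervalIntegral.integral_congr (by rw [Set.uIcc_of_le h0l]; exact hEq1)]
            have hQd : ∀ x ∈ Set.uIcc (0:ℝ) ℓ, HasDerivAt Q (g1 x) x := by
              intro x _
              have := (((hasDerivAt_pow 2 x).const_mul (Real.pi/ℓ^2)).add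
                ((hasDerivAt_pow 3 x).const_mul (-8/(3*ℓ^3)))).add
                ((hasDerivAt_pow 4 x).const_mul (1/(2*ℓ^4)))
              refine this.congr_deriv ?_
              rw [hg1]
              field_simp
              ring
            rw [intervalIntegral.integral_eq_sub_of_hasDerivAt hQd
              (hg1cont.intervalIntegrable 0 ℓ)]
            rw [hQ]
            field_simp
            ring
          have v2 : ∫ t in ℓ..(Real.sqrt 2 * ℓ), fTL ℓ t = 19/6 - Real.pi := by
            rw [intervalIntegral.integral_congr (by rw [Set.uIcc_of_le hsl]; exact hEq2)]
            rw [intervalIntegral.integral_eq_sub_of_hasDeriv_right_of_le hsl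
              ((contOn_FF hℓ).mono Icc_subset_Ici_self)
              (fun x hx => ((FF_hasDeriv hℓ hx.1).hasDerivWithinAt))
              ((by rw [Set.uIcc_of_le hsl]; exact hg2cont :
                ContinuousOn g2 (Set.uIcc ℓ (Real.sqrt 2 * ℓ))).intervalIntegrable) ]
            -- compute FF at the endpoints
            have h2 : (0:ℝ) ≤ 2 := by norm_num
            have h1 : (Real.sqrt 2 * ℓ)^2 - ℓ^2 = ℓ^2 := by
              rw [mul_pow, Real.sq_sqrt h2]; ring
            have hsq : Real.sqrt ((Real.sqrt 2*ℓ)^2 - ℓ^2) = ℓ := by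
              rw [h1, Real.sqrt_sq hℓ.le]
            have h3 : ℓ/(Real.sqrt 2*ℓ) = Real.sqrt 2/2 := by
              rw [div_eq_div_iff (by positivity) (by norm_num)]
              nlinarith [Real.sq_sqrt h2]
            have h4 : Real.arcsin (Real.sqrt 2/2) = Real.pi/4 := by
              rw [← Real.sin_pi_div_four]
              exact Real.arcsin_sin (by linarith [Real.pi_pos]) (by linarith [Real.pi_pos])
            unfold FF
            rw [h3, h4, hsq, div_self hℓ.ne', Real.arcsin_one, sub_self, Real.sqrt_zero,
              mul_pow, Real.sq_sqrt h2]
            have h24 : Real.sqrt 2^4 = 4 := by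
              rw [show Real.sqrt 2^4 = (Real.sqrt 2^2)^2 by ring, Real.sq_sqrt h2]
              norm_num
            have h24' : (Real.sqrt 2*ℓ)^4 = 4*ℓ^4 := by rw [mul_pow, h24]
            field_simp
            rw [h24]
            ring
          rw [v1, v2]
          ring
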